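/- arXiv:0712.1485 — 3 statements merged into one kernel-verified Lean document; each statement's English description precedes it below -/
import Mathlib

section
/- If operators f_j^± satisfy the parafermion triple relations, then the elements E_{jk} := ½[f_j^+, f_k^-] satisfy the gl(n) commutation relations [E_{ij}, E_{kl}] = δ_{jk} E_{il} − δ_{li} E_{kj} for all i,j,k,l ∈ {1,…,n}. -/
lemma comm_expand {A : Type*} [Ring A] (X c d P Q : A)
    (hP : X*c - c*X = P) (hQ : X*d - d*X = Q) :
    X*(c*d - d*c) - (c*d - d*c)*X = (P*d - d*P) - (Q*c - c*Q) := by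
  rw [← hP, ← hQ]; noncomm_ring

/-- if `f_j^±` satisfy the parafermion triple relations, then the elements
`E_{jk} := ½[f_j^+, f_k^-]` satisfy the `gl(n)` relations
`[E_{ij}, E_{kl}] = δ_{jk} E_{il} − δ_{li} E_{kj}`. -/
theorem parafermion_gives_gl_relations
    (n : ℕ) (A : Type*) [Ring A] [Algebra ℚ A]
    (fp fm : Fin n → A)
    (triple : ∀ (j k l : Fin n) (ξ η ε : ℚ),
      (ξ = 1 ∨ ξ = -1) → (η = 1 ∨ η = -1) → (ε = 1 ∨ ε = -1) →
      (let f : Fin n → ℚ → A := fun i s => if s = 1 then fp i else fm i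
       let c : A → A → A := fun a b => a * b - b * a
       c (c (f j ξ) (f k η)) (f l ε) =
         ((ε - η) ^ 2 / 2) • (if k = l then f j ξ else 0) -
         ((ε - ξ) ^ 2 / 2) • (if j = l then f k η else 0))) :
    let E : Fin n → Fin n → A :=
      fun j k => (1 / 2 : ℚ) • (fp j * fm k - fm k * fp j)
    ∀ i j k l : Fin n,
      E i j * E k l - E k l * E i j =
        (if j = k then E i l else 0) - (if l = i then E k j else 0) := by
  intro E i j k l
  have T1 := triple i j k 1 (-1) 1 (Or.inl rfl) (Or.inr rfl) (Or.inl rfl)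
  have T2 := triple i j l 1 (-1) (-1) (Or.inl rfl) (Or.inr rfl) (Or.inr rfl)
  norm_num at T1 T2
  have key := comm_expand (fp i * fm j - fm j * fp i) (fp k) (fm l) _ _ T1 T2
  simp only [E]
  simp only [show (l = i) ↔ (i = l) from eq_comm]
  by_cases hjk : j = k <;> by_cases hil : i = l <;>
      simp only [hjk, hil, if_true, if_false, smul_mul_assoc, mul_smul_comm, neg_mul, mul_neg, neg_neg, smul_neg, zero_mul, mul_zero, neg_zero, sub_zero, zero_sub] at key ⊢ <;>
    linear_combination (norm := module) (1/4 : ℚ) • key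
end

section
/- For any positive integer p and n ≥ 1, the product formula identity ∏_{1≤j≤k≤n} (p+1+2n−j−k)/(1+2n−j−k) = ∏_{i=0}^{⌊(n−1)/2⌋} C(p+2n−2i−1, 2n−4i−1) / C(2n−2i−1, 2n−4i−1) holds, where C(a,b) denotes the binomial coefficient. -/
open Finset

/-- The building block: `(p+m)/m` as a rational. -/
private def gQ (p m : ℕ) : ℚ := ((p : ℚ) + m) / m

/-- descFactorial of a shifted number as a product over an interval. -/
private lemma descFact_Ico (a M L : ℕ) (hL : L ≤ M) :
    (a + M).descFactorial L = ∏ m ∈ Finset.Ico (M - L + 1) (M + 1), (a + m) := by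
  rw [Nat.descFactorial_eq_prod_range]
  refine Finset.prod_nbij' (fun t => M - t) (fun m => M - m) ?_ ?_ ?_ ?_ ?_
  · intro t ht
    simp only [mem_range] at ht
    simp only [mem_Ico]
    omega
  · intro m hm
    simp only [mem_Ico] at hm
    simp only [mem_range]
    omega
  · intro t ht; simp only [mem_range] at ht; show M - (M - t) = t; omega
  · intro m hm; simp only [mem_Ico] at hm; show M - (M - m) = m; omega
  · intro t ht; simp only [mem_range] at ht; show a + M - t = a + (M - t); omega

/-- Ratio of binomial coefficients as product of `(p+m)/m`. -/
private lemma choose_ratio (p M L : ℕ) (hL : L ≤ M) :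
    ((p + M).choose L : ℚ) / (M.choose L : ℚ)
      = ∏ m ∈ Finset.Ico (M - L + 1) (M + 1), gQ p m := by
  have h1 : (p + M).descFactorial L = ∏ m ∈ Finset.Ico (M - L + 1) (M + 1), (p + m) :=
    descFact_Ico p M L hL
  have h2 : M.descFactorial L = ∏ m ∈ Finset.Ico (M - L + 1) (M + 1), m := by
    simpa using descFact_Ico 0 M L hL
  have hc1 : ((p + M).descFactorial L : ℚ) = (L.factorial : ℚ) * ((p + M).choose L : ℚ) := by
    rw [Nat.descFactorial_eq_factorial_mul_choose]; push_cast; ring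
  have hc2 : ((M).descFactorial L : ℚ) = (L.factorial : ℚ) * ((M).choose L : ℚ) := by
    rw [Nat.descFactorial_eq_factorial_mul_choose]; push_cast; ring
  have hfac : (L.factorial : ℚ) ≠ 0 := by exact_mod_cast L.factorial_ne_zero
  have : ((p + M).choose L : ℚ) / (M.choose L : ℚ)
      = ((p + M).descFactorial L : ℚ) / ((M).descFactorial L : ℚ) := by
    rw [hc1, hc2, mul_div_mul_left _ _ hfac]
  rw [this, h1, h2]
  push_cast
  rw [← Finset.prod_div_distrib]
  rfl

/-- Telescoping product of consecutive pairs of intervals. -/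
private lemma rev_pairs (f : ℕ → ℚ) : ∀ (I : ℕ) (c : ℕ), 2 * I ≤ c →
    (∏ i ∈ range I, ∏ m ∈ Finset.Ico (c - 2*i) (c - 2*i + 2), f m)
      = ∏ m ∈ Finset.Ico (c - 2*I + 2) (c + 2), f m
  | 0, c, _ => by simp
  | I+1, c, hc => by
    rw [prod_range_succ, rev_pairs f I c (by omega),
      show c - 2*I + 2 = (c - 2*(I+1) + 2) + 2 by omega,
      show c - 2*I = (c - 2*(I+1) + 2) by omega, mul_comm,
      Finset.prod_Ico_consecutive f (by omega) (by omega)]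

/-- The main combinatorial regrouping. -/
private lemma tri2 (f : ℕ → ℚ) : ∀ n : ℕ,
    (∏ k ∈ range n, ∏ m ∈ Finset.Ico (k+1) (2*k+2), f m)
      = ∏ i ∈ range ((n+1)/2), ∏ m ∈ Finset.Ico (2*i+1) (2*n - 2*i), f m := by
  intro n
  induction n with
  | zero => simp
  | succ n ih =>
    rw [prod_range_succ, ih, show 2*n+2 = 2*(n+1) by ring]
    rcases Nat.even_or_odd n with ⟨a, ha⟩ | ⟨a, ha⟩
    · -- n = a + a (even)
      rw [show (n+1)/2 = a by omega, show (n+1+1)/2 = a + 1 by omega, prod_range_succ]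
      have h3 : ∀ i ∈ range a,
          (∏ m ∈ Finset.Ico (2*i+1) (2*(n+1) - 2*i), f m)
            = (∏ m ∈ Finset.Ico (2*i+1) (2*n - 2*i), f m)
              * ∏ m ∈ Finset.Ico (2*n - 2*i) (2*n - 2*i + 2), f m := by
        intro i hi
        simp only [mem_range] at hi
        rw [show 2*(n+1) - 2*i = (2*n - 2*i) + 2 by omega,
          Finset.prod_Ico_consecutive f (by omega) (by omega)]
      rw [Finset.prod_congr rfl h3, Finset.prod_mul_distrib,
        rev_pairs f a (2*n) (by omega),
        show 2*n - 2*a + 2 = n + 2 by omega,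
        show 2*n + 2 = 2*(n+1) by ring,
        show 2*a+1 = n+1 by omega, show 2*(n+1) - 2*a = n + 2 by omega,
        ← Finset.prod_Ico_consecutive f (show n+1 ≤ n+2 by omega) (show n+2 ≤ 2*(n+1) by omega)]
      ring
    · -- n = 2a+1 (odd)
      rw [show (n+1)/2 = a + 1 by omega, show (n+1+1)/2 = a + 1 by omega]
      have h3 : ∀ i ∈ range (a+1),
          (∏ m ∈ Finset.Ico (2*i+1) (2*(n+1) - 2*i), f m)
            = (∏ m ∈ Finset.Ico (2*i+1) (2*n - 2*i), f m)
              * ∏ m ∈ Finset.Ico (2*n - 2*i) (2*n - 2*i + 2), f m := by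
        intro i hi
        simp only [mem_range] at hi
        rw [show 2*(n+1) - 2*i = (2*n - 2*i) + 2 by omega,
          Finset.prod_Ico_consecutive f (by omega) (by omega)]
      rw [Finset.prod_congr rfl h3, Finset.prod_mul_distrib,
        rev_pairs f (a+1) (2*n) (by omega),
        show 2*n - 2*(a+1) + 2 = n + 1 by omega,
        show 2*n + 2 = 2*(n+1) by ring]




/-- for positive `p` and `n ≥ 1`,
`∏_{1≤j≤k≤n} (p+1+2n−j−k)/(1+2n−j−k)
  = ∏_{i=0}^{⌊(n−1)/2⌋} C(p+2n−2i−1, 2n−4i−1) / C(2n−2i−1, 2n−4i−1)`.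
(Indices `j,k : Fin n` are zero-indexed, corresponding to `j+1, k+1`.) -/
theorem dimension_product_binomial_identity (n p : ℕ) (hn : 1 ≤ n) (hp : 0 < p) :
    (∏ q ∈ Finset.univ.filter (fun q : Fin n × Fin n => q.1 ≤ q.2),
        ((p : ℚ) + 1 + 2 * n - ((q.1 : ℚ) + 1) - ((q.2 : ℚ) + 1)) /
          (1 + 2 * n - ((q.1 : ℚ) + 1) - ((q.2 : ℚ) + 1))) =
      ∏ i ∈ Finset.range ((n - 1) / 2 + 1),
        ((p + 2 * n - 2 * i - 1).choose (2 * n - 4 * i - 1) : ℚ) /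
          ((2 * n - 2 * i - 1).choose (2 * n - 4 * i - 1) : ℚ) := by
  -- Step A: rewrite each LHS factor as `gQ p (2n-1-(j+k))`
  have hterm : ∀ q ∈ Finset.univ.filter (fun q : Fin n × Fin n => q.1 ≤ q.2),
      ((p : ℚ) + 1 + 2 * n - ((q.1 : ℚ) + 1) - ((q.2 : ℚ) + 1)) /
          (1 + 2 * n - ((q.1 : ℚ) + 1) - ((q.2 : ℚ) + 1))
        = gQ p (2 * n - 1 - (q.1.val + q.2.val)) := by
    intro q _
    have hj := q.1.isLt
    have hk := q.2.isLt
    have e : ((2 * n - 1 - (q.1.val + q.2.val) : ℕ) : ℚ)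
        = 2 * n - 1 - (q.1.val : ℚ) - (q.2.val : ℚ) := by
      rw [Nat.cast_sub (by omega), Nat.cast_sub (by omega)]
      push_cast; ring
    have e1 : ((p : ℚ) + 1 + 2 * n - ((q.1 : ℚ) + 1) - ((q.2 : ℚ) + 1))
        = (p : ℚ) + ((2 * n - 1 - (q.1.val + q.2.val) : ℕ) : ℚ) := by rw [e]; ring
    have e2 : (1 + 2 * (n:ℚ) - ((q.1 : ℚ) + 1) - ((q.2 : ℚ) + 1))
        = ((2 * n - 1 - (q.1.val + q.2.val) : ℕ) : ℚ) := by rw [e]; ring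
    rw [e1, e2]; rfl
  rw [Finset.prod_congr rfl hterm]
  -- Step B: reverse the indices
  have hrev : (∏ q ∈ Finset.univ.filter (fun q : Fin n × Fin n => q.1 ≤ q.2),
        gQ p (2 * n - 1 - (q.1.val + q.2.val)))
      = ∏ q ∈ Finset.univ.filter (fun q : Fin n × Fin n => q.1 ≤ q.2),
        gQ p (q.1.val + q.2.val + 1) := by
    refine Finset.prod_nbij' (fun q => (q.2.rev, q.1.rev)) (fun q => (q.2.rev, q.1.rev))
      ?_ ?_ ?_ ?_ ?_
    · intro q hq
      simp only [mem_filter, mem_univ, true_and] at hq ⊢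
      exact Fin.rev_le_rev.mpr hq
    · intro q hq
      simp only [mem_filter, mem_univ, true_and] at hq ⊢
      exact Fin.rev_le_rev.mpr hq
    · intro q _; simp [Fin.rev_rev]
    · intro q _; simp [Fin.rev_rev]
    · intro q _
      have hj := q.1.isLt
      have hk := q.2.isLt
      congr 1
      simp only [Fin.val_rev]
      omega
  rw [hrev]
  -- Step C: turn the Fin-pair product into a double product over ranges
  have hC : (∏ q ∈ Finset.univ.filter (fun q : Fin n × Fin n => q.1 ≤ q.2),
        gQ p (q.1.val + q.2.val + 1))
      = ∏ k ∈ range n, ∏ m ∈ Finset.Ico (k+1) (2*k+2), gQ p m := by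
    rw [Finset.prod_filter]
    rw [← Finset.univ_product_univ, Finset.prod_product_right]
    rw [← Fin.prod_univ_eq_prod_range (fun k => ∏ m ∈ Finset.Ico (k+1) (2*k+2), gQ p m) n]
    refine Finset.prod_congr rfl fun k _ => ?_
    have hk := k.isLt
    have step1 : (∏ j : Fin n, if j ≤ k then gQ p (j.val + k.val + 1) else 1)
        = ∏ j ∈ range n, if j ≤ k.val then gQ p (j + k.val + 1) else 1 := by
      rw [← Fin.prod_univ_eq_prod_range (fun j => if j ≤ k.val then gQ p (j + k.val + 1) else 1) n]
      refine Finset.prod_congr rfl fun j _ => ?_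
      simp only [Fin.le_def]
    rw [step1, ← Finset.prod_filter]
    have hset : (range n).filter (fun j => j ≤ k.val) = range (k.val + 1) := by
      ext j; simp only [mem_filter, mem_range]; omega
    rw [hset, Finset.prod_Ico_eq_prod_range]
    have hlen : 2 * k.val + 2 - (k.val + 1) = k.val + 1 := by omega
    rw [hlen]
    refine Finset.prod_congr rfl fun j _ => ?_
    congr 1
    omega
  rw [hC, tri2 (gQ p) n]
  -- Step D: identify the RHS terms via `choose_ratio`
  rw [show (n-1)/2 + 1 = (n+1)/2 by omega]
  refine Finset.prod_congr rfl fun i hi => ?_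
  simp only [mem_range] at hi
  have h2i : 2 * i < n := by omega
  have := choose_ratio p (2*n - 2*i - 1) (2*n - 4*i - 1) (by omega)
  rw [show p + 2*n - 2*i - 1 = p + (2*n - 2*i - 1) by omega, this,
    show 2*n - 2*i - 1 - (2*n - 4*i - 1) + 1 = 2*i + 1 by omega,
    show 2*n - 2*i - 1 + 1 = 2*n - 2*i by omega]
end

section
/- Define operators f_1^+, f_2^+, f_1^-, f_2^- on the vector space with orthonormal basis {|m₁₂,m₂₂;m₁₁⟩ : p ≥ m₁₂ ≥ m₁₁ ≥ m₂₂ ≥ 0 integers} by: f_1^+|m₁₂,m₂₂;m₁₁⟩ = √((m₁₁−m₂₂+1)(p−m₁₂)) |m₁₂+1,m₂₂;m₁₁+1⟩ − √((m₁₂−m₁₁)(m₂₂+1)) |m₁₂,m₂₂+1;m₁₁+1⟩, f_2^+|m₁₂,m₂₂;m₁₁⟩ = √((m₁₂−m₁₁+1)(p−m₁₂)) |m₁₂+1,m₂₂;m₁₁⟩ + √((m₁₁−m₂₂)(m₂₂+1)) |m₁₂,m₂₂+1;m₁₁⟩, and f_j^- the adjoints (transposes with respect to the given basis). Then [f_1^-,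 f_1^+] acts diagonally with [f_1^-,f_1^+]|m₁₂,m₂₂;m₁₁⟩ = (p − 2m₁₁)|m₁₂,m₂₂;m₁₁⟩. -/
namespace StmtSO5

variable (p : ℕ)

/-- Validity of a triple `(m₁₂, m₂₂, m₁₁)`: `p ≥ m₁₂ ≥ m₁₁ ≥ m₂₂ ≥ 0`. -/
def valid (t : ℕ × ℕ × ℕ) : Prop := t.2.1 ≤ t.2.2 ∧ t.2.2 ≤ t.1 ∧ t.1 ≤ p

instance (t : ℕ × ℕ × ℕ) : Decidable (valid p t) := by unfold valid; infer_instance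

/-- The so(5) Fock space `W(p)`: the real vector space with basis the valid triples. -/
abbrev V := {t : ℕ × ℕ × ℕ // valid p t} →₀ ℝ

/-- The basis vector `|m₁₂,m₂₂;m₁₁⟩`, interpreted as `0` when the triple is out of range. -/
noncomputable def b (t : ℕ × ℕ × ℕ) : V p :=
  if h : valid p t then Finsupp.single ⟨t, h⟩ 1 else 0

/-- The inner product making the basis vectors orthonormal. -/
noncomputable def ip (u v : V p) : ℝ := u.sum fun t c => c * v t

/-- The defining matrix elements of `f₁⁺`. -/
def F1pAction (f1p : V p →ₗ[ℝ] V p) : Prop :=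
  ∀ m12 m22 m11 : ℕ, valid p (m12, m22, m11) →
    f1p (b p (m12, m22, m11)) =
      Real.sqrt (((m11 : ℝ) - m22 + 1) * ((p : ℝ) - m12)) • b p (m12 + 1, m22, m11 + 1) -
      Real.sqrt (((m12 : ℝ) - m11) * ((m22 : ℝ) + 1)) • b p (m12, m22 + 1, m11 + 1)

/-- The defining matrix elements of `f₂⁺`. -/
def F2pAction (f2p : V p →ₗ[ℝ] V p) : Prop :=
  ∀ m12 m22 m11 : ℕ, valid p (m12, m22, m11) →
    f2p (b p (m12, m22, m11)) =
      Real.sqrt (((m12 : ℝ) - m11 + 1) * ((p : ℝ) - m12)) • b p (m12 + 1, m22, m11) +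
      Real.sqrt (((m11 : ℝ) - m22) * ((m22 : ℝ) + 1)) • b p (m12, m22 + 1, m11)

/-- `g` is the adjoint (transpose with respect to the given orthonormal basis) of `f`. -/
def IsAdjoint (f g : V p →ₗ[ℝ] V p) : Prop := ∀ u v : V p, ip p (g u) v = ip p u (f v)

lemma b_not_valid {t} (h : ¬ valid p t) : b p t = 0 := by simp [b, h]

lemma b_apply (u : ℕ × ℕ × ℕ) {t} (ht : valid p t) :
    (b p u) ⟨t, ht⟩ = if u = t then 1 else 0 := by
  unfold b
  split_ifs with h h2 h2
  · simp [Finsupp.single_apply, Subtype.ext_iff, h2]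
  · rw [Finsupp.single_apply, if_neg]
    simp [Subtype.ext_iff, h2]
  · exact absurd (h2 ▸ ht) h
  · simp

lemma ip_b_left {t} (ht : valid p t) (v : V p) : ip p (b p t) v = v ⟨t, ht⟩ := by
  unfold ip b
  rw [dif_pos ht, Finsupp.sum_single_index] <;> simp

lemma ip_b_right (u : V p) {t} (ht : valid p t) : ip p u (b p t) = u ⟨t, ht⟩ := by
  unfold ip b
  rw [dif_pos ht]
  rw [Finsupp.sum]
  rw [Finset.sum_eq_single (⟨t, ht⟩ : {t : ℕ × ℕ × ℕ // valid p t})]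
  · simp
  · intro r _ hr; simp [Finsupp.single_apply, hr.symm]
  · intro h; simp [Finsupp.notMem_support_iff.mp h]

lemma f1p_total {f1p : V p →ₗ[ℝ] V p} (h1 : F1pAction p f1p) (m12 m22 m11 : ℕ) :
    f1p (b p (m12, m22, m11)) =
      Real.sqrt (((m11 : ℝ) - m22 + 1) * ((p : ℝ) - m12)) • b p (m12 + 1, m22, m11 + 1) -
      Real.sqrt (((m12 : ℝ) - m11) * ((m22 : ℝ) + 1)) • b p (m12, m22 + 1, m11 + 1) := by
  by_cases ht : valid p (m12, m22, m11)
  · exact h1 m12 m22 m11 ht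
  · rw [b_not_valid p ht, map_zero]
    unfold valid at ht
    push_neg at ht
    by_cases h22 : m22 ≤ m11
    · by_cases h11 : m11 ≤ m12
      · have hp : p < m12 := ht h22 h11
        rw [b_not_valid p (t := (m12 + 1, m22, m11 + 1)) (by unfold valid; simp; omega),
            b_not_valid p (t := (m12, m22 + 1, m11 + 1)) (by unfold valid; simp; omega)]
        simp
      · push_neg at h11
        rw [b_not_valid p (t := (m12 + 1, m22, m11 + 1)) (by unfold valid; simp; omega),
            b_not_valid p (t := (m12, m22 + 1, m11 + 1)) (by unfold valid; simp; omega)]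
        simp
    · push_neg at h22
      rw [b_not_valid p (t := (m12, m22 + 1, m11 + 1)) (by unfold valid; simp; omega)]
      by_cases he : m22 = m11 + 1
      · have : ((m11 : ℝ) - m22 + 1) * ((p : ℝ) - m12) = 0 := by
          subst he; push_cast; ring
        rw [this, Real.sqrt_zero]
        simp
      · rw [b_not_valid p (t := (m12 + 1, m22, m11 + 1)) (by unfold valid; simp; omega)]
        simp

lemma f1m_apply {f1p f1m : V p →ₗ[ℝ] V p} (h1 : F1pAction p f1p)
    (h1m : IsAdjoint p f1p f1m) (m12 m22 m11 : ℕ) (ht : valid p (m12, m22, m11)) :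
    f1m (b p (m12, m22, m11)) =
      Real.sqrt (((m11 : ℝ) - m22) * ((p : ℝ) - m12 + 1)) • b p (m12 - 1, m22, m11 - 1) -
      Real.sqrt (((m12 : ℝ) - m11 + 1) * (m22 : ℝ)) • b p (m12, m22 - 1, m11 - 1) := by
  ext ⟨⟨s12, s22, s11⟩, hs⟩
  have key : (f1m (b p (m12, m22, m11))) ⟨(s12, s22, s11), hs⟩
      = (f1p (b p (s12, s22, s11))) ⟨(m12, m22, m11), ht⟩ := by
    rw [← ip_b_right p _ hs, h1m, ip_b_left p ht]
  rw [key, f1p_total p h1 s12 s22 s11]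
  simp only [Finsupp.sub_apply, Finsupp.smul_apply, smul_eq_mul, b_apply]
  have T1 : m22 ≤ m11 := ht.1
  have T2 : m11 ≤ m12 := ht.2.1
  have T3 : m12 ≤ p := ht.2.2
  have S1 : s22 ≤ s11 := hs.1
  have S2 : s11 ≤ s12 := hs.2.1
  have S3 : s12 ≤ p := hs.2.2
  split_ifs
  all_goals simp only [Prod.mk.injEq] at *
  all_goals try omega
  · -- s₊₁ = t, t₋₁ = s
    rename_i hA hB hC hD
    obtain ⟨e1, e2, e3⟩ := hA
    subst e1 e2 e3
    simp only [mul_zero, mul_one, sub_zero]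
    congr 1
    push_cast
    ring
  · -- s₊₂ = t, t₋₂ = s
    rename_i hA hB hC hD
    obtain ⟨e1, e2, e3⟩ := hB
    subst e1 e2 e3
    simp only [zero_mul, mul_zero, mul_one, zero_sub]
    congr 2
    push_cast
    ring
  · -- t₋₁ = s and t₋₂ = s : forces m12 = m11 = m22 = 0
    rename_i hA hB hC hD
    have e12 : m12 = 0 := by omega
    have e11 : m11 = 0 := by omega
    have e22 : m22 = 0 := by omega
    subst e12 e11 e22
    norm_num
  · -- t₋₁ = s only : forces m11 = m22 = 0
    rename_i hA hB hC hD
    have e11 : m11 = 0 := by omega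
    have e22 : m22 = 0 := by omega
    subst e11 e22
    norm_num
  · -- t₋₂ = s only : forces m22 = 0
    rename_i hA hB hC hD
    have e22 : m22 = 0 := by omega
    subst e22
    norm_num
  · norm_num

/-- with `f₁⁺, f₂⁺` given by the explicit so(5) matrix elements and
`f₁⁻, f₂⁻` their transposes, the commutator `[f₁⁻, f₁⁺]` acts diagonally:
`[f₁⁻,f₁⁺]|m₁₂,m₂₂;m₁₁⟩ = (p − 2m₁₁)|m₁₂,m₂₂;m₁₁⟩`. -/
theorem f1_commutator_diagonal (hp : 0 < p)
    (f1p f2p f1m f2m : V p →ₗ[ℝ] V p)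
    (h1 : F1pAction p f1p) (h2 : F2pAction p f2p)
    (h1m : IsAdjoint p f1p f1m) (h2m : IsAdjoint p f2p f2m) :
    ∀ m12 m22 m11 : ℕ, valid p (m12, m22, m11) →
      f1m (f1p (b p (m12, m22, m11))) - f1p (f1m (b p (m12, m22, m11))) =
        ((p : ℝ) - 2 * m11) • b p (m12, m22, m11) := by
  intro m12 m22 m11 ht
  have T1 : m22 ≤ m11 := ht.1
  have T2 : m11 ≤ m12 := ht.2.1
  have T3 : m12 ≤ p := ht.2.2
  -- the four guarded computations
  have G1 : Real.sqrt (((m11 : ℝ) - m22 + 1) * ((p : ℝ) - m12)) • f1m (b p (m12 + 1, m22, m11 + 1)) =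
      Real.sqrt (((m11 : ℝ) - m22 + 1) * ((p : ℝ) - m12)) •
        (Real.sqrt (((m11 : ℝ) - m22 + 1) * ((p : ℝ) - m12)) • b p (m12, m22, m11) -
         Real.sqrt (((m12 : ℝ) - m11 + 1) * (m22 : ℝ)) • b p (m12 + 1, m22 - 1, m11)) := by
    by_cases hc : m12 + 1 ≤ p
    · have hv : valid p (m12 + 1, m22, m11 + 1) :=
        ⟨show m22 ≤ m11 + 1 by omega, show m11 + 1 ≤ m12 + 1 by omega, hc⟩
      rw [f1m_apply p h1 h1m _ _ _ hv]
      simp only [Nat.add_sub_cancel]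
      congr 1
      congr 1
      · congr 2
        push_cast
        ring
      · congr 2
        push_cast
        ring
    · have hm : m12 = p := by omega
      have hz : ((m11 : ℝ) - m22 + 1) * ((p : ℝ) - m12) = 0 := by rw [hm]; ring
      rw [hz, Real.sqrt_zero, zero_smul, zero_smul]
  have G2 : Real.sqrt (((m12 : ℝ) - m11) * ((m22 : ℝ) + 1)) • f1m (b p (m12, m22 + 1, m11 + 1)) =
      Real.sqrt (((m12 : ℝ) - m11) * ((m22 : ℝ) + 1)) •
        (Real.sqrt (((m11 : ℝ) - m22) * ((p : ℝ) - m12 + 1)) • b p (m12 - 1, m22 + 1, m11) -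
         Real.sqrt (((m12 : ℝ) - m11) * ((m22 : ℝ) + 1)) • b p (m12, m22, m11)) := by
    by_cases hc : m11 + 1 ≤ m12
    · have hv : valid p (m12, m22 + 1, m11 + 1) :=
        ⟨show m22 + 1 ≤ m11 + 1 by omega, hc, T3⟩
      rw [f1m_apply p h1 h1m _ _ _ hv]
      simp only [Nat.add_sub_cancel]
      congr 1
      congr 1
      · congr 2
        push_cast
        ring
      · congr 2
        push_cast
        ring
    · have hm : m11 = m12 := by omega
      have hz : ((m12 : ℝ) - m11) * ((m22 : ℝ) + 1) = 0 := by rw [hm]; ring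
      rw [hz, Real.sqrt_zero, zero_smul, zero_smul]
  have G3 : Real.sqrt (((m11 : ℝ) - m22) * ((p : ℝ) - m12 + 1)) • f1p (b p (m12 - 1, m22, m11 - 1)) =
      Real.sqrt (((m11 : ℝ) - m22) * ((p : ℝ) - m12 + 1)) •
        (Real.sqrt (((m11 : ℝ) - m22) * ((p : ℝ) - m12 + 1)) • b p (m12, m22, m11) -
         Real.sqrt (((m12 : ℝ) - m11) * ((m22 : ℝ) + 1)) • b p (m12 - 1, m22 + 1, m11)) := by
    by_cases hc : 1 ≤ m11
    · obtain ⟨k, rfl⟩ : ∃ k, m11 = k + 1 := ⟨m11 - 1, by omega⟩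
      obtain ⟨l, rfl⟩ : ∃ l, m12 = l + 1 := ⟨m12 - 1, by omega⟩
      rw [f1p_total p h1]
      simp only [Nat.add_sub_cancel]
      congr 1
      congr 1
      · congr 2
        push_cast
        ring
      · congr 2
        push_cast
        ring
    · have hm : m11 = 0 := by omega
      have hm2 : m22 = 0 := by omega
      have hz : ((m11 : ℝ) - m22) * ((p : ℝ) - m12 + 1) = 0 := by rw [hm, hm2]; push_cast; ring
      rw [hz, Real.sqrt_zero, zero_smul, zero_smul]
  have G4 : Real.sqrt (((m12 : ℝ) - m11 + 1) * (m22 : ℝ)) • f1p (b p (m12, m22 - 1, m11 - 1)) =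
      Real.sqrt (((m12 : ℝ) - m11 + 1) * (m22 : ℝ)) •
        (Real.sqrt (((m11 : ℝ) - m22 + 1) * ((p : ℝ) - m12)) • b p (m12 + 1, m22 - 1, m11) -
         Real.sqrt (((m12 : ℝ) - m11 + 1) * (m22 : ℝ)) • b p (m12, m22, m11)) := by
    by_cases hc : 1 ≤ m22
    · obtain ⟨j, rfl⟩ : ∃ j, m22 = j + 1 := ⟨m22 - 1, by omega⟩
      obtain ⟨k, rfl⟩ : ∃ k, m11 = k + 1 := ⟨m11 - 1, by omega⟩
      rw [f1p_total p h1]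
      simp only [Nat.add_sub_cancel]
      congr 1
      congr 1
      · congr 2
        push_cast
        ring
      · congr 2
        push_cast
        ring
    · have hm : m22 = 0 := by omega
      have hz : ((m12 : ℝ) - m11 + 1) * (m22 : ℝ) = 0 := by rw [hm]; push_cast; ring
      rw [hz, Real.sqrt_zero, zero_smul, zero_smul]
  have hA : Real.sqrt (((m11 : ℝ) - m22 + 1) * ((p : ℝ) - m12)) *
      Real.sqrt (((m11 : ℝ) - m22 + 1) * ((p : ℝ) - m12)) = ((m11 : ℝ) - m22 + 1) * ((p : ℝ) - m12) :=
    Real.mul_self_sqrt (mul_nonneg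
      (by
        have h : (m22:ℝ) ≤ m11 := by exact_mod_cast T1
        linarith)
      (by
        have h : (m12:ℝ) ≤ p := by exact_mod_cast T3
        linarith))
  have hB : Real.sqrt (((m12 : ℝ) - m11) * ((m22 : ℝ) + 1)) *
      Real.sqrt (((m12 : ℝ) - m11) * ((m22 : ℝ) + 1)) = ((m12 : ℝ) - m11) * ((m22 : ℝ) + 1) :=
    Real.mul_self_sqrt (mul_nonneg
      (by
        have h : (m11:ℝ) ≤ m12 := by exact_mod_cast T2
        linarith)
      (by positivity))
  have hC : Real.sqrt (((m11 : ℝ) - m22) * ((p : ℝ) - m12 + 1)) *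
      Real.sqrt (((m11 : ℝ) - m22) * ((p : ℝ) - m12 + 1)) = ((m11 : ℝ) - m22) * ((p : ℝ) - m12 + 1) :=
    Real.mul_self_sqrt (mul_nonneg
      (by
        have h : (m22:ℝ) ≤ m11 := by exact_mod_cast T1
        linarith)
      (by
        have h : (m12:ℝ) ≤ p := by exact_mod_cast T3
        linarith))
  have hD : Real.sqrt (((m12 : ℝ) - m11 + 1) * (m22 : ℝ)) *
      Real.sqrt (((m12 : ℝ) - m11 + 1) * (m22 : ℝ)) = ((m12 : ℝ) - m11 + 1) * (m22 : ℝ) :=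
    Real.mul_self_sqrt (mul_nonneg
      (by
        have h : (m11:ℝ) ≤ m12 := by exact_mod_cast T2
        linarith)
      (by positivity))
  rw [h1 _ _ _ ht, f1m_apply p h1 h1m _ _ _ ht, map_sub, map_sub, map_smul, map_smul,
    map_smul, map_smul, G1, G2, G3, G4]
  match_scalars
  · linear_combination hA + hB - hC - hD
  · ring
  · ring


end StmtSO5
end
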